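/- Let Λ = [[a,b],[c,d]] be a real 2×2 matrix with ad − bc = 1 and b > 0, let Ω > 0, and define φ_LP(t) = (Ω/b) · e^{−i a t²/(2b)} · sinc(Ω t / b). Then φ_LP is bandlimited in phase space: for every ω ∈ ℝ with |ω| ≠ πΩ, the improper integral lim_{R→∞} ∫_{−R}^{R} φ_LP(t) · conj(k_Λ(t,ω)) dt exists and equals e^{i d ω²/(2b)}/√(2πib) when |ω| < πΩ, and equals 0 when |ω| > πΩ. -/

import Mathlib

open Complex Filter

noncomputable section

/-- The LCT kernel `k_Λ(t, ω) = (1/√(-2πib)) exp(-(i/(2b))(a t² + d ω² - 2 ω t))`,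
where `√` is the principal branch of the complex square root. -/
def lctKernel (a b d : ℝ) (t ω : ℝ) : ℂ :=
  (((-2 : ℂ) * (Real.pi : ℂ) * Complex.I * (b : ℂ)) ^ ((1 : ℂ) / 2))⁻¹ *
    Complex.exp (-(Complex.I / (2 * (b : ℂ))) *
      ((a : ℂ) * (t : ℂ) ^ 2 + (d : ℂ) * (ω : ℂ) ^ 2 - 2 * (ω : ℂ) * (t : ℂ)))

/-- The normalized sinc function: `sinc x = sin (π x) / (π x)` for `x ≠ 0`, `sinc 0 = 1`. -/
def sinc (x : ℝ) : ℝ :=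
  if x = 0 then 1 else Real.sin (Real.pi * x) / (Real.pi * x)

/-- The low-pass chirp-modulated sinc filter `φ_LP(t) = (Ω/b) e^{-i a t²/(2b)} sinc (Ω t/b)`. -/
def phiLP (a b Ω : ℝ) (t : ℝ) : ℂ :=
  ((Ω / b : ℝ) : ℂ) * Complex.exp (-Complex.I * (a : ℂ) * (t : ℂ) ^ 2 / (2 * (b : ℂ))) *
    ((sinc (Ω * t / b) : ℝ) : ℂ)

open MeasureTheory Set intervalIntegral
open Real hiding sinc continuous_sinc sinc_neg sinc_zero

set_option maxHeartbeats 1000000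

lemma sinc_eq {x : ℝ} (hx : x ≠ 0) : sinc x = Real.sin (Real.pi * x) / (Real.pi * x) :=
  if_neg hx

lemma continuous_sinc : Continuous sinc := by
  rw [continuous_iff_continuousAt]
  intro x
  rcases eq_or_ne x 0 with rfl | hx
  · have key : Filter.Tendsto (fun y : ℝ => Real.sin y / y) (nhdsWithin 0 {0}ᶜ) (nhds 1) := by
      have h := (Real.hasDerivAt_sin 0)
      rw [hasDerivAt_iff_tendsto_slope] at h
      have : (slope Real.sin 0) = fun y : ℝ => Real.sin y / y := by
        funext y; simp [slope_def_field]
      rw [this] at h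
      simpa [Real.cos_zero] using h
    have hmul : Filter.Tendsto (fun x : ℝ => Real.pi * x) (nhdsWithin 0 {0}ᶜ)
        (nhdsWithin 0 {0}ᶜ) := by
      rw [tendsto_nhdsWithin_iff]
      constructor
      · have : Filter.Tendsto (fun x : ℝ => Real.pi * x) (nhds 0) (nhds 0) := by
          have := (continuous_const.mul continuous_id :
            Continuous fun x : ℝ => Real.pi * x).tendsto 0
          have h2 : Tendsto (fun x : ℝ => Real.pi * x) (nhds 0) (nhds (Real.pi * 0)) := this
          rwa [mul_zero] at h2
        exact this.mono_left nhdsWithin_le_nhds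
      · filter_upwards [self_mem_nhdsWithin] with y hy
        simp only [mem_compl_iff, mem_singleton_iff] at hy ⊢
        exact mul_ne_zero Real.pi_ne_zero hy
    have key2 : Filter.Tendsto sinc (nhdsWithin 0 {0}ᶜ) (nhds 1) := by
      refine ((key.comp hmul).congr' ?_)
      filter_upwards [self_mem_nhdsWithin] with y hy
      simp only [mem_compl_iff, mem_singleton_iff] at hy
      rw [Function.comp_apply, sinc_eq hy]
    rw [ContinuousAt, ← nhdsNE_sup_pure 0]
    rw [Filter.tendsto_sup]
    constructor
    · simpa [sinc] using key2
    · simpa [sinc] using tendsto_pure_nhds sinc 0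
  · have : ∀ᶠ y in nhds x, sinc y = Real.sin (Real.pi * y) / (Real.pi * y) := by
      filter_upwards [isOpen_compl_singleton.mem_nhds hx] with y hy
      exact sinc_eq hy
    refine ContinuousAt.congr ?_ (Filter.EventuallyEq.symm this)
    exact ContinuousAt.div (by fun_prop) (by fun_prop)
      (mul_ne_zero Real.pi_ne_zero hx)

lemma sinc_neg (x : ℝ) : sinc (-x) = sinc x := by
  rcases eq_or_ne x 0 with rfl | hx
  · simp
  · rw [sinc_eq hx, sinc_eq (neg_ne_zero.2 hx)]
    rw [mul_neg, Real.sin_neg, neg_div_neg_eq]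

-- FTC computation of ∫_0^R e^{-st} sin t dt
lemma integral_exp_sin (s R : ℝ) : ∫ t in (0:ℝ)..R, Real.exp (-(s*t)) * Real.sin t
    = (1 - Real.exp (-(s*R)) * (Real.cos R + s * Real.sin R))/(1+s^2) := by
  have hs2 : (1:ℝ) + s^2 ≠ 0 := by positivity
  have hderiv : ∀ t : ℝ, HasDerivAt
      (fun t => -(Real.exp (-(s*t)) * (Real.cos t + s * Real.sin t))/(1+s^2))
      (Real.exp (-(s*t)) * Real.sin t) t := by
    intro t
    have h0 : HasDerivAt (fun t : ℝ => -(s*t)) (-s) t := by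
      have h := ((hasDerivAt_id t).const_mul s).neg
      rw [mul_one] at h
      exact h
    have h1 : HasDerivAt (fun t : ℝ => Real.exp (-(s*t))) (Real.exp (-(s*t)) * (-s)) t :=
      (Real.hasDerivAt_exp _).comp t h0
    have h2 : HasDerivAt (fun t : ℝ => Real.cos t + s * Real.sin t)
        (-Real.sin t + s * Real.cos t) t :=
      (Real.hasDerivAt_cos t).add ((Real.hasDerivAt_sin t).const_mul s)
    have h3 := ((h1.mul h2).neg).div_const (1+s^2)
    refine h3.congr_deriv ?_
    field_simp
    ring
  rw [intervalIntegral.integral_eq_sub_of_hasDerivAt (fun t _ => hderiv t)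
    (Continuous.intervalIntegrable (by fun_prop) _ _)]
  field_simp
  simp only [mul_zero, neg_zero, Real.exp_zero, Real.sin_zero, Real.cos_zero]
  ring

lemma integrableOn_exp_neg_mul (R : ℝ) (hR : 0 < R) :
    IntegrableOn (fun s : ℝ => Real.exp (-(s*R))) (Ioi 0) := by
  have := exp_neg_integrableOn_Ioi 0 hR
  refine this.congr_fun (fun s _ => by ring_nf) measurableSet_Ioi

lemma integrableOn_mul_exp_neg_mul (R : ℝ) (hR : 0 < R) :
    IntegrableOn (fun s : ℝ => s * Real.exp (-(s*R))) (Ioi 0) := by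
  have h := integrableOn_rpow_mul_exp_neg_mul_rpow (p := 1) (s := 1) (b := R)
    (by norm_num) one_pos hR
  refine h.congr_fun (fun s hs => ?_) measurableSet_Ioi
  have hs' : (0:ℝ) < s := hs
  simp only [Real.rpow_one]
  ring_nf

lemma integral_one_add_mul_exp (R : ℝ) (hR : 0 < R) :
    ∫ s in Ioi (0:ℝ), (1+s) * Real.exp (-(s*R)) = 1/R + 1/R^2 := by
  have hint : IntegrableOn (fun s : ℝ => (1+s) * Real.exp (-(s*R))) (Ioi 0) := by
    have h2 := (integrableOn_exp_neg_mul R hR).add (integrableOn_mul_exp_neg_mul R hR)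
    refine (IntegrableOn.congr_fun h2 (fun s _ => by simp; ring) measurableSet_Ioi)
  have hderiv : ∀ x ∈ Ici (0:ℝ), HasDerivAt
      (fun s => -(((1+s)/R + 1/R^2) * Real.exp (-(s*R))))
      ((1+x) * Real.exp (-(x*R))) x := by
    intro x _
    have h0 : HasDerivAt (fun s : ℝ => -(s*R)) (-R) x := by
      have h := ((hasDerivAt_id x).mul_const R).neg
      rw [one_mul] at h
      exact h
    have h1 : HasDerivAt (fun s : ℝ => Real.exp (-(s*R))) (Real.exp (-(x*R)) * (-R)) x :=
      (Real.hasDerivAt_exp _).comp x h0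
    have h2 : HasDerivAt (fun s : ℝ => (1+s)/R + 1/R^2) (1/R) x := by
      have := (((hasDerivAt_id x).const_add 1).div_const R).add_const (1/R^2)
      simp only [one_div] at this ⊢
      exact this
    have h3 := (h2.mul h1).neg
    refine h3.congr_deriv ?_
    field_simp
    ring
  have hlim : Tendsto (fun s : ℝ => -(((1+s)/R + 1/R^2) * Real.exp (-(s*R))))
      atTop (nhds 0) := by
    have h1 : Tendsto (fun s : ℝ => ((1+s)/R + 1/R^2) * Real.exp (-(s*R))) atTop (nhds 0) := by
      have hx : Tendsto (fun x : ℝ => x ^ (1:ℝ) * Real.exp (-R * x)) atTop (nhds 0) :=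
        tendsto_rpow_mul_exp_neg_mul_atTop_nhds_zero 1 R hR
      have hx' : Tendsto (fun x : ℝ => x * Real.exp (-(x*R))) atTop (nhds 0) := by
        refine hx.congr' ?_
        filter_upwards [eventually_gt_atTop 0] with x hxpos
        rw [Real.rpow_one]; ring_nf
      have he : Tendsto (fun x : ℝ => Real.exp (-(x*R))) atTop (nhds 0) := by
        have : Tendsto (fun x : ℝ => x * R) atTop atTop :=
          Tendsto.atTop_mul_const hR tendsto_id
        have h := (Real.tendsto_exp_atTop.comp this).inv_tendsto_atTop
        simp only [Real.exp_neg]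
        exact h
      have := ((he.const_mul (1/R)).add (hx'.const_mul (1/R))).add (he.const_mul (1/R^2))
      simp only [mul_zero, add_zero, zero_add] at this
      refine this.congr (fun x => ?_)
      field_simp
    simpa using h1.neg
  have := integral_Ioi_of_hasDerivAt_of_tendsto' hderiv hint hlim
  rw [this]
  field_simp
  simp

lemma integral_Ioi_exp_section (t : ℝ) (ht : 0 < t) :
    ∫ s in Ioi (0:ℝ), Real.exp (-(s*t)) = 1/t := by
  have hderiv : ∀ x ∈ Ici (0:ℝ), HasDerivAt (fun s : ℝ => -(Real.exp (-(s*t)))/t)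
      (Real.exp (-(x*t))) x := by
    intro x _
    have h0 : HasDerivAt (fun s : ℝ => -(s*t)) (-t) x := by
      have h := ((hasDerivAt_id x).mul_const t).neg
      rw [one_mul] at h
      exact h
    have h1 := (((Real.hasDerivAt_exp _).comp x h0).neg).div_const t
    refine h1.congr_deriv ?_
    field_simp
  have hlim : Tendsto (fun s : ℝ => -(Real.exp (-(s*t)))/t) atTop (nhds 0) := by
    have : Tendsto (fun s : ℝ => s * t) atTop atTop := Tendsto.atTop_mul_const ht tendsto_id
    have he : Tendsto (fun s : ℝ => Real.exp (-(s*t))) atTop (nhds 0) := by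
      have h := (Real.tendsto_exp_atTop.comp this).inv_tendsto_atTop
      simp only [Real.exp_neg]
      exact h
    simpa using (he.neg).div_const t
  rw [integral_Ioi_of_hasDerivAt_of_tendsto' hderiv (integrableOn_exp_neg_mul t ht) hlim]
  simp only [zero_mul, neg_zero, Real.exp_zero, zero_sub, one_div]
  rw [neg_div, neg_neg, one_div]

lemma remainder_norm_le (R s : ℝ) (hs : 0 < s) :
    ‖Real.exp (-(s*R)) * (Real.cos R + s * Real.sin R)/(1+s^2)‖ ≤ (1+s) * Real.exp (-(s*R)) := by
  have hc : |Real.cos R + s * Real.sin R| ≤ 1 + s := by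
    refine (abs_add_le _ _).trans ?_
    have h1 := Real.abs_cos_le_one R
    have h2 : |s * Real.sin R| ≤ s := by
      rw [abs_mul, abs_of_pos hs]
      nlinarith [Real.abs_sin_le_one R, abs_nonneg (Real.sin R)]
    linarith
  have hpos : (0:ℝ) < 1 + s^2 := by positivity
  rw [Real.norm_eq_abs, abs_div, abs_mul, Real.abs_exp, abs_of_pos hpos]
  calc Real.exp (-(s*R)) * |Real.cos R + s*Real.sin R| / (1+s^2)
      ≤ Real.exp (-(s*R)) * (1+s) / 1 := by
        apply div_le_div₀ (by positivity) ?_ one_pos (by nlinarith)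
        exact mul_le_mul_of_nonneg_left hc (Real.exp_pos _).le
    _ = (1+s) * Real.exp (-(s*R)) := by ring

lemma aesm_remainder (R : ℝ) (μ : Measure ℝ) :
    AEStronglyMeasurable
      (fun s : ℝ => Real.exp (-(s*R)) * (Real.cos R + s * Real.sin R)/(1+s^2)) μ := by
  apply Continuous.aestronglyMeasurable
  apply Continuous.div (by fun_prop) (by fun_prop)
  intro s; positivity

lemma integrableOn_remainder (R : ℝ) (hR : 0 < R) :
    IntegrableOn (fun s : ℝ => Real.exp (-(s*R)) * (Real.cos R + s * Real.sin R)/(1+s^2))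
      (Ioi 0) := by
  have hbound : IntegrableOn (fun s : ℝ => (1+s) * Real.exp (-(s*R))) (Ioi 0) := by
    have h2 := (integrableOn_exp_neg_mul R hR).add (integrableOn_mul_exp_neg_mul R hR)
    exact IntegrableOn.congr_fun h2 (fun s _ => by simp; ring) measurableSet_Ioi
  refine Integrable.mono' hbound (aesm_remainder R _) ?_
  filter_upwards [ae_restrict_mem measurableSet_Ioi] with s hs
  exact remainder_norm_le R s hs

lemma sin_div_eq_integral (R : ℝ) (hR : 0 < R) :
    ∫ t in (0:ℝ)..R, Real.sin t / t
      = π/2 - ∫ s in Ioi (0:ℝ), Real.exp (-(s*R)) * (Real.cos R + s * Real.sin R)/(1+s^2) := by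
  have hmeas : AEStronglyMeasurable (fun p : ℝ × ℝ => Real.exp (-(p.2*p.1)) * Real.sin p.1)
      ((volume.restrict (Ioc 0 R)).prod (volume.restrict (Ioi 0))) := by
    apply Continuous.aestronglyMeasurable
    fun_prop
  have hint : Integrable (fun p : ℝ × ℝ => Real.exp (-(p.2*p.1)) * Real.sin p.1)
      ((volume.restrict (Ioc 0 R)).prod (volume.restrict (Ioi 0))) := by
    rw [MeasureTheory.integrable_prod_iff hmeas]
    constructor
    · filter_upwards [ae_restrict_mem measurableSet_Ioc] with t ht
      exact ((integrableOn_exp_neg_mul t ht.1).mul_const _)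
    · have heq : ∀ᵐ t ∂(volume.restrict (Ioc 0 R)),
          (∫ s in Ioi (0:ℝ), ‖Real.exp (-(s*t)) * Real.sin t‖) = |Real.sin t| / t := by
        filter_upwards [ae_restrict_mem measurableSet_Ioc] with t ht
        have ht' : (0:ℝ) < t := ht.1
        have hn : ∀ s : ℝ, ‖Real.exp (-(s*t)) * Real.sin t‖
            = Real.exp (-(s*t)) * |Real.sin t| := by
          intro s; rw [norm_mul, Real.norm_eq_abs, Real.norm_eq_abs, Real.abs_exp]
        simp_rw [hn]
        rw [MeasureTheory.integral_mul_const, integral_Ioi_exp_section t ht']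
        ring
      refine (Integrable.congr ?_ (Filter.EventuallyEq.symm heq))
      refine Integrable.mono' (integrable_const 1)
        ((Measurable.div (by measurability) measurable_id).aestronglyMeasurable) ?_
      filter_upwards [ae_restrict_mem measurableSet_Ioc] with t ht
      have ht' : (0:ℝ) < t := ht.1
      rw [Real.norm_eq_abs, abs_div, abs_of_pos ht', div_le_one ht', _root_.abs_abs]
      exact Real.abs_sin_le_abs.trans (le_of_eq (abs_of_pos ht'))
  have hswap := MeasureTheory.integral_integral_swap
    (f := fun t s : ℝ => Real.exp (-(s*t)) * Real.sin t) hint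
  -- LHS of hswap: ∫ t in Ioc, ∫ s in Ioi 0, ...
  have hL : (∫ t in Ioc (0:ℝ) R, ∫ s in Ioi (0:ℝ), Real.exp (-(s*t)) * Real.sin t)
      = ∫ t in (0:ℝ)..R, Real.sin t / t := by
    rw [intervalIntegral.integral_of_le hR.le]
    apply setIntegral_congr_fun measurableSet_Ioc
    intro t ht
    have ht' : (0:ℝ) < t := ht.1
    dsimp only
    rw [MeasureTheory.integral_mul_const, integral_Ioi_exp_section t ht']
    ring
  have hR' : (∫ s in Ioi (0:ℝ), ∫ t in Ioc (0:ℝ) R, Real.exp (-(s*t)) * Real.sin t)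
      = ∫ s in Ioi (0:ℝ), ((1+s^2)⁻¹ - Real.exp (-(s*R)) * (Real.cos R + s * Real.sin R)/(1+s^2)) := by
    apply setIntegral_congr_fun measurableSet_Ioi
    intro s _
    dsimp only
    rw [← intervalIntegral.integral_of_le hR.le, integral_exp_sin]
    field_simp
  rw [hL, hR'] at hswap
  rw [hswap, integral_sub integrable_inv_one_add_sq.integrableOn (integrableOn_remainder R hR)]
  congr 1
  simpa using (integral_Ioi_inv_one_add_sq (i := 0))

theorem tendsto_integral_sin_div : Tendsto (fun R : ℝ => ∫ t in (0:ℝ)..R, Real.sin t / t)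
    atTop (nhds (π/2)) := by
  have hE : Tendsto (fun R : ℝ =>
      ∫ s in Ioi (0:ℝ), Real.exp (-(s*R)) * (Real.cos R + s * Real.sin R)/(1+s^2))
      atTop (nhds 0) := by
    have hg : Tendsto (fun R : ℝ => 1/R + 1/R^2) atTop (nhds 0) := by
      have h1 : Tendsto (fun R : ℝ => R⁻¹) atTop (nhds 0) := tendsto_inv_atTop_zero
      have h2 : Tendsto (fun R : ℝ => (R^2)⁻¹) atTop (nhds 0) :=
        tendsto_inv_atTop_zero.comp (tendsto_pow_atTop two_ne_zero)
      simpa [one_div] using h1.add h2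
    refine squeeze_zero_norm' ?_ hg
    filter_upwards [eventually_gt_atTop 0] with R hR
    rw [← integral_one_add_mul_exp R hR]
    apply MeasureTheory.norm_integral_le_of_norm_le
    · have h2 := (integrableOn_exp_neg_mul R hR).add (integrableOn_mul_exp_neg_mul R hR)
      exact IntegrableOn.congr_fun h2 (fun s _ => by simp; ring) measurableSet_Ioi
    · filter_upwards [ae_restrict_mem measurableSet_Ioi] with s hs
      exact remainder_norm_le R s hs
  have : Tendsto (fun R : ℝ => π/2 -
      ∫ s in Ioi (0:ℝ), Real.exp (-(s*R)) * (Real.cos R + s * Real.sin R)/(1+s^2))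
      atTop (nhds (π/2)) := by
    simpa using (tendsto_const_nhds (x := π/2)).sub hE
  refine this.congr' ?_
  filter_upwards [eventually_gt_atTop 0] with R hR
  exact (sin_div_eq_integral R hR).symm

lemma sinc_zero : sinc 0 = 1 := by simp [sinc]

def Sfun (β t : ℝ) : ℝ := β * sinc (β * t / π)

lemma continuous_Sfun (β : ℝ) : Continuous (Sfun β) := by
  unfold Sfun
  exact continuous_const.mul (continuous_sinc.comp (by fun_prop))

lemma Sfun_eq (β : ℝ) {t : ℝ} (ht : t ≠ 0) : Sfun β t = Real.sin (β*t) / t := by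
  rcases eq_or_ne β 0 with rfl | hβ
  · simp [Sfun]
  · have h : β * t / π ≠ 0 := by
      apply div_ne_zero (mul_ne_zero hβ ht) Real.pi_ne_zero
    rw [Sfun, sinc_eq h]
    rw [show π * (β * t / π) = β * t by field_simp]
    field_simp

lemma ae_ne_zero : ∀ᵐ t : ℝ, t ≠ (0:ℝ) := by
  rw [ae_iff]
  simp only [ne_eq, not_not]
  have : {a : ℝ | a = 0} = {(0:ℝ)} := by ext x; simp
  rw [this]
  exact Real.volume_singleton

lemma tendsto_S_pos {β : ℝ} (hβ : 0 < β) :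
    Tendsto (fun R : ℝ => ∫ t in (0:ℝ)..R, Sfun β t) atTop (nhds (π/2)) := by
  have key : ∀ R : ℝ, ∫ t in (0:ℝ)..R, Sfun β t
      = ∫ u in (0:ℝ)..(β*R), Real.sin u / u := by
    intro R
    have h1 : ∫ t in (0:ℝ)..R, Sfun β t
        = ∫ t in (0:ℝ)..R, β * ((fun u => Real.sin u / u) (β * t)) := by
      apply intervalIntegral.integral_congr_ae
      filter_upwards [ae_ne_zero] with t ht _
      rw [Sfun_eq β ht]
      show Real.sin (β * t) / t = β * (Real.sin (β * t) / (β * t))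
      field_simp
    rw [h1, intervalIntegral.integral_const_mul,
      intervalIntegral.integral_comp_mul_left (fun u => Real.sin u / u) hβ.ne']
    simp [smul_eq_mul]
    rw [← mul_assoc, mul_inv_cancel₀ hβ.ne', one_mul]
  have hcomp : Tendsto (fun R : ℝ => β * R) atTop atTop :=
    Tendsto.const_mul_atTop hβ tendsto_id
  have := tendsto_integral_sin_div.comp hcomp
  refine this.congr (fun R => ?_)
  exact (key R).symm

lemma tendsto_S_neg {β : ℝ} (hβ : β < 0) :
    Tendsto (fun R : ℝ => ∫ t in (0:ℝ)..R, Sfun β t) atTop (nhds (-(π/2))) := by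
  have hneg : ∀ t, Sfun β t = -(Sfun (-β) t) := by
    intro t
    unfold Sfun
    rw [show -β * t / π = -(β * t / π) by ring, sinc_neg]
    ring
  have := (tendsto_S_pos (neg_pos.2 hβ)).neg
  refine this.congr (fun R => ?_)
  rw [← intervalIntegral.integral_neg]
  exact intervalIntegral.integral_congr (fun t _ => (hneg t).symm)

lemma integral_neg_reflect (f : ℝ → ℝ) (hf : Continuous f) (R : ℝ) :
    ∫ x in (-R)..R, f x = ∫ x in (0:ℝ)..R, (f (-x) + f x) := by
  have h1 : ∫ x in (0:ℝ)..R, f (-x) = ∫ x in (-R)..(0:ℝ), f x := by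
    simpa using intervalIntegral.integral_comp_neg (a := (0:ℝ)) (b := R) f
  have hnegc : Continuous (fun x : ℝ => f (-x)) := hf.comp continuous_neg
  rw [intervalIntegral.integral_add (hnegc.intervalIntegrable _ _)
    (hf.intervalIntegrable _ _), h1,
    intervalIntegral.integral_add_adjacent_intervals (hf.intervalIntegrable _ _)
    (hf.intervalIntegrable _ _)]

lemma algebra_helper (Ωv b π' x sX sXY sXmY cY : ℝ) (hb : b ≠ 0) (hx : x ≠ 0)
    (hπ : π' ≠ 0) (hΩ : Ωv ≠ 0) (h : 2*sX*cY = sXmY + sXY) :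
    Ωv/b * (sX/(π'*(Ωv*x/b))) * cY + Ωv/b * (sX/(π'*(Ωv*x/b))) * cY
      = 1/π' * (sXY/x + sXmY/x) := by
  field_simp
  linear_combination h

/-- **`φ_LP` is bandlimited in phase space:** for `|ω| < πΩ` the improper integral
`lim_{R→∞} ∫_{-R}^R φ_LP(t) conj (k_Λ(t,ω)) dt` exists and equals
`e^{i d ω²/(2b)} / √(2πib)`, and for `|ω| > πΩ` it exists and equals `0`. -/
theorem phiLP_bandlimited_phase_space (a b c d : ℝ) (hdet : a * d - b * c = 1) (hb : 0 < b)
    (Ω : ℝ) (hΩ : 0 < Ω) (ω : ℝ) :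
    (|ω| < Real.pi * Ω →
      Tendsto (fun R : ℝ => ∫ t in (-R)..R, phiLP a b Ω t * (starRingEnd ℂ) (lctKernel a b d t ω))
        atTop (nhds (Complex.exp (Complex.I * (d : ℂ) * (ω : ℂ) ^ 2 / (2 * (b : ℂ))) /
          ((2 * (Real.pi : ℂ) * Complex.I * (b : ℂ)) ^ ((1 : ℂ) / 2))))) ∧
    (Real.pi * Ω < |ω| →
      Tendsto (fun R : ℝ => ∫ t in (-R)..R, phiLP a b Ω t * (starRingEnd ℂ) (lctKernel a b d t ω))
        atTop (nhds 0)) := by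
  have hbne : b ≠ 0 := hb.ne'
  have hbC : (b : ℂ) ≠ 0 := Complex.ofReal_ne_zero.mpr hbne
  set αp : ℝ := (π*Ω+ω)/b with hαp
  set αm : ℝ := (π*Ω-ω)/b with hαm
  set K : ℂ := (((-2 : ℂ) * (π : ℂ) * Complex.I * (b : ℂ)) ^ ((1 : ℂ) / 2))⁻¹ with hK
  set C : ℂ := (starRingEnd ℂ) K *
    Complex.exp (Complex.I * (d:ℂ) * (ω:ℂ)^2 / (2*(b:ℂ))) with hC
  set r : ℝ → ℝ := fun t => Ω/b * sinc (Ω*t/b) with hr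
  set p : ℝ → ℝ := fun t => r t * Real.cos (-(ω*t/b)) with hp
  set q : ℝ → ℝ := fun t => r t * Real.sin (-(ω*t/b)) with hq
  have hrc : Continuous r := continuous_const.mul (continuous_sinc.comp (by fun_prop))
  have hpc : Continuous p := hrc.mul (Real.continuous_cos.comp (by fun_prop))
  have hqc : Continuous q := hrc.mul (Real.continuous_sin.comp (by fun_prop))
  set A : ℝ → ℝ := fun R => ∫ t in (0:ℝ)..R, (1/π) * (Sfun αp t + Sfun αm t) with hA
  -- Step 1: pointwise integrand identity
  have hosc : ∀ θ : ℝ, Complex.exp ((θ:ℂ) * Complex.I)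
      = ((Real.cos θ : ℝ) : ℂ) + ((Real.sin θ : ℝ) : ℂ) * Complex.I := by
    intro θ
    rw [Complex.exp_mul_I, Complex.ofReal_cos, Complex.ofReal_sin]
  have hiden : ∀ t : ℝ, phiLP a b Ω t * (starRingEnd ℂ) (lctKernel a b d t ω)
      = C * (((p t : ℝ) : ℂ) + ((q t : ℝ) : ℂ) * Complex.I) := by
    intro t
    have hconjE : (starRingEnd ℂ) (-(Complex.I / (2 * (b:ℂ))) *
        ((a:ℂ)*(t:ℂ)^2 + (d:ℂ)*(ω:ℂ)^2 - 2*(ω:ℂ)*(t:ℂ)))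
        = (Complex.I / (2*(b:ℂ))) * ((a:ℂ)*(t:ℂ)^2 + (d:ℂ)*(ω:ℂ)^2 - 2*(ω:ℂ)*(t:ℂ)) := by
      simp only [map_mul, map_div₀, map_neg, map_add, map_sub, map_pow, map_ofNat,
        Complex.conj_ofReal, Complex.conj_I]
      ring
    have hexp : Complex.exp (-Complex.I * (a:ℂ) * (t:ℂ)^2 / (2*(b:ℂ))) *
        Complex.exp ((Complex.I/(2*(b:ℂ))) * ((a:ℂ)*(t:ℂ)^2 + (d:ℂ)*(ω:ℂ)^2 - 2*(ω:ℂ)*(t:ℂ)))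
        = Complex.exp (Complex.I * (d:ℂ) * (ω:ℂ)^2 / (2*(b:ℂ))) *
          Complex.exp (((-(ω*t/b) : ℝ) : ℂ) * Complex.I) := by
      rw [← Complex.exp_add, ← Complex.exp_add]
      congr 1
      push_cast
      field_simp
      ring
    have hpq : ((p t : ℝ) : ℂ) + ((q t : ℝ) : ℂ) * Complex.I
        = ((Ω/b : ℝ) : ℂ) * ((sinc (Ω*t/b) : ℝ) : ℂ)
          * Complex.exp (((-(ω*t/b) : ℝ) : ℂ) * Complex.I) := by
      rw [hp, hq]
      dsimp only
      rw [hr]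
      dsimp only
      rw [hosc]
      push_cast
      ring
    rw [phiLP, lctKernel, ← hK, map_mul, ← Complex.exp_conj, hconjE, hpq, hC]
    push_cast at hexp ⊢
    linear_combination ((Ω:ℂ)/(b:ℂ) * ((sinc (Ω*t/b) : ℝ) : ℂ) * (starRingEnd ℂ) K) * hexp
  -- Step 2: q part vanishes, p part equals A
  have hq0 : ∀ R : ℝ, (∫ t in (-R)..R, q t) = 0 := by
    intro R
    rw [integral_neg_reflect q hqc R]
    have hodd : ∀ x : ℝ, q (-x) + q x = 0 := by
      intro x
      rw [hp] at *
      show r (-x) * Real.sin (-(ω*(-x)/b)) + r x * Real.sin (-(ω*x/b)) = 0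
      have hrx : r (-x) = r x := by
        rw [hr]; dsimp only
        rw [show Ω*(-x)/b = -(Ω*x/b) by ring, sinc_neg]
      rw [hrx, show -(ω*(-x)/b) = ω*x/b by ring,
        show (ω*x/b : ℝ) = -(-(ω*x/b)) by ring, Real.sin_neg]
      ring
    rw [intervalIntegral.integral_congr (g := fun _ => (0:ℝ)) (fun x _ => hodd x)]
    simp
  have hpA : ∀ R : ℝ, (∫ t in (-R)..R, p t) = A R := by
    intro R
    rw [integral_neg_reflect p hpc R, hA]
    apply intervalIntegral.integral_congr
    intro x _
    show p (-x) + p x = 1/π * (Sfun αp x + Sfun αm x)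
    rcases eq_or_ne x 0 with rfl | hx
    · rw [hp, hr, hαp, hαm]
      dsimp only
      simp only [mul_zero, neg_zero, zero_div, mul_neg, neg_neg, zero_mul,
        Real.cos_zero, sinc_zero, Sfun, mul_one]
      field_simp
      ring
    · have hΩx : Ω*x/b ≠ 0 := div_ne_zero (mul_ne_zero hΩ.ne' hx) hbne
      have hrx : r (-x) = r x := by
        rw [hr]; dsimp only
        rw [show Ω*(-x)/b = -(Ω*x/b) by ring, sinc_neg]
      rw [hp]; dsimp only
      rw [hrx, show -(ω*(-x)/b) = ω*x/b by ring,
        show Real.cos (-(ω*x/b)) = Real.cos (ω*x/b) from Real.cos_neg _,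
        hr]
      dsimp only
      rw [sinc_eq hΩx, Sfun_eq αp hx, Sfun_eq αm hx]
      rw [show αp*x = π*(Ω*x/b) + ω*x/b by rw [hαp]; field_simp,
        show αm*x = π*(Ω*x/b) - ω*x/b by rw [hαm]; field_simp]
      have h2s := Real.two_mul_sin_mul_cos (π*(Ω*x/b)) (ω*x/b)
      exact algebra_helper Ω b π x _ _ _ _ hbne hx Real.pi_ne_zero hΩ.ne' h2s
  -- Step 3: the integral equals C * A R
  have hmain : ∀ R : ℝ, (∫ t in (-R)..R, phiLP a b Ω t * (starRingEnd ℂ) (lctKernel a b d t ω))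
      = C * ((A R : ℝ) : ℂ) := by
    intro R
    simp only [hiden]
    rw [intervalIntegral.integral_const_mul]
    congr 1
    have hpCi : IntervalIntegrable (fun x : ℝ => ((p x : ℝ) : ℂ)) volume (-R) R :=
      ((Complex.continuous_ofReal.comp hpc : Continuous fun x : ℝ => ((p x : ℝ) : ℂ))).intervalIntegrable _ _
    have hqCi : IntervalIntegrable (fun x : ℝ => ((q x : ℝ) : ℂ) * Complex.I) volume (-R) R :=
      (((Complex.continuous_ofReal.comp hqc : Continuous fun x : ℝ => ((q x : ℝ) : ℂ))).mul
        continuous_const).intervalIntegrable _ _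
    rw [intervalIntegral.integral_add hpCi hqCi,
      intervalIntegral.integral_mul_const, intervalIntegral.integral_ofReal,
      intervalIntegral.integral_ofReal, hq0 R, hpA R]
    simp
  -- Step 4: identify the constant
  have hconjK : (starRingEnd ℂ) K = ((2*(π:ℂ)*Complex.I*(b:ℂ)) ^ ((1:ℂ)/2))⁻¹ := by
    rw [hK, map_inv₀]
    congr 1
    have harg : ((-2:ℂ) * (π:ℂ) * Complex.I * (b:ℂ)).arg ≠ π := by
      intro hcon
      rw [Complex.arg_eq_pi_iff] at hcon
      have him := hcon.2
      simp only [Complex.mul_im, Complex.mul_re, Complex.I_re, Complex.I_im,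
        Complex.ofReal_re, Complex.ofReal_im, Complex.neg_re, Complex.neg_im,
        Complex.re_ofNat, Complex.im_ofNat] at him
      nlinarith [Real.pi_pos, hb]
    have hhalf : (starRingEnd ℂ) ((1:ℂ)/2) = (1:ℂ)/2 := by
      rw [map_div₀, map_one, map_ofNat]
    have h1 := Complex.conj_cpow ((-2:ℂ)*(π:ℂ)*Complex.I*(b:ℂ)) ((1:ℂ)/2) harg
    rw [hhalf] at h1
    have hcx : (starRingEnd ℂ) ((-2:ℂ)*(π:ℂ)*Complex.I*(b:ℂ)) = 2*(π:ℂ)*Complex.I*(b:ℂ) := by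
      simp only [map_mul, Complex.conj_I, map_neg, map_ofNat, Complex.conj_ofReal]
      ring
    rw [hcx] at h1
    exact h1.symm
  -- Step 5: limits of A
  constructor
  · intro hlt
    have hωlt := abs_lt.1 hlt
    have hαppos : 0 < αp := by
      rw [hαp]; apply div_pos (by linarith) hb
    have hαmpos : 0 < αm := by
      rw [hαm]; apply div_pos (by linarith) hb
    have hAlim : Tendsto A atTop (nhds 1) := by
      have hadd := ((tendsto_S_pos hαppos).add (tendsto_S_pos hαmpos)).const_mul (1/π)
      have hval : (1/π) * (π/2 + π/2) = 1 := by
        field_simp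
        norm_num
      rw [hval] at hadd
      refine hadd.congr (fun R => ?_)
      rw [hA]
      rw [← intervalIntegral.integral_add ((continuous_Sfun αp).intervalIntegrable _ _)
        ((continuous_Sfun αm).intervalIntegrable _ _),
        ← intervalIntegral.integral_const_mul]
    have hfin : Tendsto (fun R : ℝ => C * ((A R : ℝ) : ℂ)) atTop (nhds (C * ((1:ℝ) : ℂ))) :=
      Tendsto.const_mul C ((Complex.continuous_ofReal.tendsto 1).comp hAlim)
    have hval : C * ((1:ℝ) : ℂ) = Complex.exp (Complex.I * (d : ℂ) * (ω : ℂ) ^ 2 / (2 * (b : ℂ))) /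
        ((2 * (π : ℂ) * Complex.I * (b : ℂ)) ^ ((1 : ℂ) / 2)) := by
      rw [hC, hconjK]
      rw [Complex.ofReal_one, mul_one, div_eq_mul_inv]
      ring
    rw [← hval]
    exact hfin.congr (fun R => (hmain R).symm)
  · intro hgt
    have hAlim : Tendsto A atTop (nhds 0) := by
      have key : Tendsto (fun R : ℝ => (∫ t in (0:ℝ)..R, Sfun αp t)
          + (∫ t in (0:ℝ)..R, Sfun αm t)) atTop (nhds 0) := by
        rcases lt_abs.1 hgt with hω | hω
        · have hαppos : 0 < αp := by rw [hαp]; apply div_pos (by nlinarith [Real.pi_pos]) hb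
          have hαmneg : αm < 0 := by
            rw [hαm]; apply div_neg_of_neg_of_pos (by linarith) hb
          have := (tendsto_S_pos hαppos).add (tendsto_S_neg hαmneg)
          simpa using this
        · have hαpneg : αp < 0 := by
            rw [hαp]; apply div_neg_of_neg_of_pos (by linarith) hb
          have hαmpos : 0 < αm := by rw [hαm]; apply div_pos (by nlinarith [Real.pi_pos]) hb
          have := (tendsto_S_pos hαmpos).add (tendsto_S_neg hαpneg)
          have h2 := ((tendsto_S_neg hαpneg).add (tendsto_S_pos hαmpos))
          simpa using h2
      have := key.const_mul (1/π)
      simp only [mul_zero] at this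
      refine this.congr (fun R => ?_)
      rw [hA]
      rw [← intervalIntegral.integral_add ((continuous_Sfun αp).intervalIntegrable _ _)
        ((continuous_Sfun αm).intervalIntegrable _ _),
        ← intervalIntegral.integral_const_mul]
    have hfin : Tendsto (fun R : ℝ => C * ((A R : ℝ) : ℂ)) atTop (nhds (C * ((0:ℝ) : ℂ))) :=
      Tendsto.const_mul C ((Complex.continuous_ofReal.tendsto 0).comp hAlim)
    have hval : C * ((0:ℝ) : ℂ) = 0 := by simp
    rw [← hval]
    exact hfin.congr (fun R => (hmain R).symm)
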